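/- Let T be a finite tree of order n ≥ 2, let ξ be the number of support vertices of T, and let θ be the maximum number of leaves adjacent to a single support vertex of T. Then pd(T) ≤ ξ + θ − 1. -/

import Mathlib

open SimpleGraph

variable {V : Type*}

/-- Distance from a vertex to a set of vertices: `min_{u ∈ P} d(v,u)`. -/
noncomputable def distSet (G : SimpleGraph V) (v : V) (P : Set V) : ℕ :=
  sInf ((G.dist v) '' P)

/-- An ordered partition of `V` into `t` (nonempty) classes, encoded by a surjective
map `c : V → Fin t`, is resolving if distinct vertices have distinct partition
representations, i.e. distinct vectors of distances to the classes. -/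
def IsResolvingPartition (G : SimpleGraph V) {t : ℕ} (c : V → Fin t) : Prop :=
  Function.Surjective c ∧
    ∀ u v : V, (∀ i : Fin t, distSet G u {x | c x = i} = distSet G v {x | c x = i}) → u = v

/-- The partition dimension: the least `t` admitting a resolving partition into `t` classes. -/
noncomputable def partitionDim (G : SimpleGraph V) : ℕ :=
  sInf {t : ℕ | ∃ c : V → Fin t, IsResolvingPartition G c}

/-- A set `S` is a resolving set if distinct vertices have distinct vectors of
distances to the elements of `S`. -/
def IsResolvingSet (G : SimpleGraph V) (S : Set V) : Prop :=
  ∀ u v : V, (∀ w ∈ S, G.dist u w = G.dist v w) → u = v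

/-- The metric dimension: the least cardinality of a resolving set. -/
noncomputable def metricDim (G : SimpleGraph V) : ℕ :=
  sInf {k : ℕ | ∃ S : Set V, S.ncard = k ∧ IsResolvingSet G S}

/-- A leaf is a vertex of degree one. -/
def IsLeaf (G : SimpleGraph V) (v : V) : Prop := (G.neighborSet v).ncard = 1

/-- A major vertex is a vertex of degree at least three. -/
def IsMajor (G : SimpleGraph V) (v : V) : Prop := 3 ≤ (G.neighborSet v).ncard

/-- A path graph: a tree in which every vertex has degree at most two. -/
def IsPathGraph (G : SimpleGraph V) : Prop :=
  G.IsTree ∧ ∀ v : V, (G.neighborSet v).ncard ≤ 2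

/-- `u` is a terminal vertex of the major vertex `v` if `u` is a leaf and
`d(u,v) < d(u,w)` for every other major vertex `w`. -/
def IsTerminalOf (G : SimpleGraph V) (u v : V) : Prop :=
  IsLeaf G u ∧ IsMajor G v ∧ ∀ w : V, IsMajor G w → w ≠ v → G.dist u v < G.dist u w

/-- The terminal degree of a vertex: its number of terminal vertices. -/
noncomputable def terminalDegree (G : SimpleGraph V) (v : V) : ℕ :=
  {u | IsTerminalOf G u v}.ncard

/-- An exterior major vertex: a major vertex with positive terminal degree. -/
def IsExteriorMajor (G : SimpleGraph V) (v : V) : Prop :=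
  IsMajor G v ∧ 0 < terminalDegree G v

/-- `n₁(G)`: the number of leaves. -/
noncomputable def numLeaves (G : SimpleGraph V) : ℕ := {v | IsLeaf G v}.ncard

/-- `ex(G)`: the number of exterior major vertices. -/
noncomputable def numExteriorMajor (G : SimpleGraph V) : ℕ := {v | IsExteriorMajor G v}.ncard

/-- A support vertex: a vertex adjacent to a leaf. -/
def IsSupport (G : SimpleGraph V) (v : V) : Prop := ∃ u, G.Adj v u ∧ IsLeaf G u

/-- `ξ(G)`: the number of support vertices. -/
noncomputable def numSupport (G : SimpleGraph V) : ℕ := {v | IsSupport G v}.ncard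

/-- `θ(G)`: the maximum number of leaves adjacent to a single support vertex. -/
noncomputable def maxLeavesAtSupport (G : SimpleGraph V) : ℕ :=
  sSup {n : ℕ | ∃ v, IsSupport G v ∧ n = {u | G.Adj v u ∧ IsLeaf G u}.ncard}


/-! ### Auxiliary lemmas -/

section AuxDist
variable {G : SimpleGraph V}

lemma distSet_singleton' (v u : V) : distSet G v {u} = G.dist v u := by
  simp [distSet]

lemma distSet_le' {P : Set V} {u : V} (h : u ∈ P) (v : V) : distSet G v P ≤ G.dist v u :=
  Nat.sInf_le ⟨u, h, rfl⟩

lemma distSet_eq_zero_of_mem' {P : Set V} {v : V} (h : v ∈ P) : distSet G v P = 0 := by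
  have h0 : (0:ℕ) ∈ (G.dist v) '' P := ⟨v, h, SimpleGraph.dist_self⟩
  exact Nat.le_antisymm (Nat.sInf_le h0) (Nat.zero_le _)

lemma exists_distSet_eq' {P : Set V} (h : P.Nonempty) (v : V) :
    ∃ u ∈ P, distSet G v P = G.dist v u := by
  obtain ⟨u, hu, heq⟩ := Nat.sInf_mem (h.image (G.dist v))
  exact ⟨u, hu, heq.symm⟩

lemma mem_of_distSet_eq_zero' (hc : G.Connected) {P : Set V} {v : V} (hP : P.Nonempty)
    (h : distSet G v P = 0) : v ∈ P := by
  obtain ⟨u, hu, heq⟩ := exists_distSet_eq' hP v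
  rw [h] at heq
  rwa [(hc.dist_eq_zero_iff).mp heq.symm]

lemma dist_leaf_aux (hc : G.Connected) {u s x : V}
    (hns : G.neighborSet u = {s}) (hx : x ≠ u) :
    G.dist x u = G.dist x s + 1 := by
  have hadj : G.Adj u s := by
    have : s ∈ G.neighborSet u := by rw [hns]; rfl
    exact this
  have h1 : G.dist x u ≤ G.dist x s + 1 := by
    calc G.dist x u ≤ G.dist x s + G.dist s u := hc.dist_triangle
    _ = G.dist x s + 1 := by rw [dist_eq_one_iff_adj.mpr hadj.symm]
  have h2 : G.dist x s + 1 ≤ G.dist x u := by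
    obtain ⟨p, hp, hlen⟩ := hc.exists_path_of_dist u x
    have hpos : 0 < G.dist u x := hc.pos_dist_of_ne (Ne.symm hx)
    have hnil : ¬ p.Nil := by
      rw [SimpleGraph.Walk.not_nil_iff_lt_length, hlen]; exact hpos
    have hget : p.getVert 1 = s := by
      have : p.getVert 1 ∈ G.neighborSet u := p.adj_snd hnil
      rwa [hns, Set.mem_singleton_iff] at this
    have := SimpleGraph.dist_le p.tail
    have hl : p.tail.length + 1 = p.length := SimpleGraph.Walk.length_tail_add_one hnil
    have this2 : G.dist s x ≤ p.tail.length := by rw [← hget]; exact this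
    rw [SimpleGraph.dist_comm, show G.dist x u = G.dist u x from dist_comm ..]
    omega
  omega

lemma exists_leaf_beyond [Fintype V] (hT : G.IsTree) {x y : V}
    (hxy : x ≠ y) :
    ∃ l : V, IsLeaf G l ∧ G.dist l y = G.dist l x + G.dist x y := by
  classical
  have hc := hT.isConnected
  let A : Finset V := Finset.univ.filter (fun z => G.dist z y = G.dist z x + G.dist x y)
  have hxA : x ∈ A := by simp [A]
  obtain ⟨l, hlA, hmax⟩ := A.exists_max_image (fun z => G.dist z y) ⟨x, hxA⟩
  have hl : G.dist l y = G.dist l x + G.dist x y := by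
    simpa [A] using hlA
  refine ⟨l, ?_, hl⟩
  by_contra hleaf
  set d := G.dist l y with hd
  have hxypos : 0 < G.dist x y := hc.pos_dist_of_ne hxy
  have hdpos : 0 < d := by omega
  have hly : l ≠ y := by
    intro h; rw [h, SimpleGraph.dist_self] at hd; omega
  obtain ⟨Q, hQp, hQl⟩ := hc.exists_path_of_dist l y
  have hQnil : ¬ Q.Nil := by rw [SimpleGraph.Walk.not_nil_iff_lt_length, hQl]; exact hdpos
  set p := Q.getVert 1 with hp
  have hadjp : G.Adj l p := Q.adj_snd hQnil
  have hp_nbr : p ∈ G.neighborSet l := hadjp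
  have hnbr_fin : (G.neighborSet l).Finite := Set.toFinite _
  have hcard : 1 < (G.neighborSet l).ncard := by
    have h1 : 0 < (G.neighborSet l).ncard := by
      rw [Set.ncard_pos hnbr_fin]; exact ⟨p, hp_nbr⟩
    have : (G.neighborSet l).ncard ≠ 1 := hleaf
    omega
  obtain ⟨z, hz_nbr, hzp⟩ := Set.exists_ne_of_one_lt_ncard hcard p
  have hadjz : G.Adj l z := hz_nbr
  have hzl : z ≠ l := fun h => G.irrefl (h ▸ hadjz)
  have hzy_le : G.dist z y ≤ d + 1 := by
    calc G.dist z y ≤ G.dist z l + G.dist l y := hc.dist_triangle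
    _ = 1 + d := by rw [show G.dist z l = 1 from dist_eq_one_iff_adj.mpr hadjz.symm]
    _ = d + 1 := by omega
  have hkey : ¬ (G.dist z y ≤ d) := by
    intro hle
    obtain ⟨W, hWp, hWl⟩ := hc.exists_path_of_dist z y
    by_cases hmem : l ∈ W.support
    · have h1 : G.dist l y ≤ (W.dropUntil l hmem).length := SimpleGraph.dist_le _
      have h2 : (W.takeUntil l hmem).length + (W.dropUntil l hmem).length = W.length := by
        have := congrArg SimpleGraph.Walk.length (W.take_spec hmem)
        rwa [SimpleGraph.Walk.length_append] at this
      have h3 : (W.takeUntil l hmem).length ≠ 0 := by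
        intro h0
        exact hzl (SimpleGraph.Walk.eq_of_length_eq_zero h0)
      omega
    · have hR : (W.cons hadjz).IsPath := hWp.cons hmem
      have hQR : (⟨Q, hQp⟩ : G.Path l y) = ⟨W.cons hadjz, hR⟩ :=
        hT.IsAcyclic.path_unique _ _
      have hQR' : Q = W.cons hadjz := congrArg Subtype.val hQR
      have : p = z := by
        rw [hp, hQR', SimpleGraph.Walk.getVert_cons_succ, SimpleGraph.Walk.getVert_zero]
      exact hzp this.symm
  have hzy : G.dist z y = d + 1 := by omega
  have hzx_le : G.dist z x ≤ G.dist l x + 1 := by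
    calc G.dist z x ≤ G.dist z l + G.dist l x := hc.dist_triangle
    _ = 1 + G.dist l x := by rw [show G.dist z l = 1 from dist_eq_one_iff_adj.mpr hadjz.symm]
    _ = G.dist l x + 1 := by omega
  have hzx_ge : G.dist l x + 1 ≤ G.dist z x := by
    have := hc.dist_triangle (u := z) (v := x) (w := y)
    omega
  have hzA : z ∈ A := by
    simp only [A, Finset.mem_filter, Finset.mem_univ, true_and]
    omega
  have := hmax z hzA
  omega

open Classical in
/-- The unique neighbor of a leaf. -/
noncomputable def leafSupp (G : SimpleGraph V) (u : V) : V :=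
  if h : ∃ s, G.neighborSet u = {s} then h.choose else u

lemma neighborSet_leafSupp {u : V} (h : IsLeaf G u) :
    G.neighborSet u = {leafSupp G u} := by
  have h' : ∃ s, G.neighborSet u = {s} := Set.ncard_eq_one.mp h
  rw [leafSupp, dif_pos h']
  exact h'.choose_spec

lemma adj_leafSupp {u : V} (h : IsLeaf G u) : G.Adj (leafSupp G u) u := by
  have : leafSupp G u ∈ G.neighborSet u := by rw [neighborSet_leafSupp h]; rfl
  exact this.symm

lemma leafSupp_eq {u s : V} (h : IsLeaf G u) (hadj : G.Adj s u) : leafSupp G u = s := by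
  have : s ∈ G.neighborSet u := hadj.symm
  rw [neighborSet_leafSupp h, Set.mem_singleton_iff] at this
  exact this.symm

lemma isSupport_leafSupp {u : V} (h : IsLeaf G u) : IsSupport G (leafSupp G u) :=
  ⟨u, adj_leafSupp h, h⟩

/-- Leaves adjacent to `s`. -/
def leavesAt (G : SimpleGraph V) (s : V) : Set V := {u | G.Adj s u ∧ IsLeaf G u}

lemma leafSupp_eq_of_mem {s u : V} (h : u ∈ leavesAt G s) : leafSupp G u = s :=
  leafSupp_eq h.2 h.1

variable [Fintype V]

open Classical in
noncomputable def leafRankAt (G : SimpleGraph V) (s u : V) : ℕ :=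
  if h : u ∈ (Set.toFinite (leavesAt G s)).toFinset
  then (((Set.toFinite (leavesAt G s)).toFinset.equivFin) ⟨u, h⟩ : Fin _).val else 0

noncomputable def leafRank (G : SimpleGraph V) (u : V) : ℕ := leafRankAt G (leafSupp G u) u

lemma leafRank_eq_leafRankAt {s u : V} (h : u ∈ leavesAt G s) :
    leafRank G u = leafRankAt G s u := by
  rw [leafRank, leafSupp_eq_of_mem h]

lemma leafRankAt_lt {s u : V} (h : u ∈ leavesAt G s) :
    leafRankAt G s u < (leavesAt G s).ncard := by
  have hm : u ∈ (Set.toFinite (leavesAt G s)).toFinset := by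
    rwa [Set.Finite.mem_toFinset]
  rw [leafRankAt, dif_pos hm, Set.ncard_eq_toFinset_card _ (Set.toFinite _)]
  have := (((Set.toFinite (leavesAt G s)).toFinset.equivFin) ⟨u, hm⟩).isLt
  simpa using this

lemma leafRankAt_injOn {s u u' : V} (hu : u ∈ leavesAt G s) (hu' : u' ∈ leavesAt G s)
    (h : leafRankAt G s u = leafRankAt G s u') : u = u' := by
  have hm : u ∈ (Set.toFinite (leavesAt G s)).toFinset := by rwa [Set.Finite.mem_toFinset]
  have hm' : u' ∈ (Set.toFinite (leavesAt G s)).toFinset := by rwa [Set.Finite.mem_toFinset]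
  rw [leafRankAt, dif_pos hm, leafRankAt, dif_pos hm'] at h
  have := ((Set.toFinite (leavesAt G s)).toFinset.equivFin).injective (Fin.ext h)
  exact congrArg Subtype.val this

lemma exists_leafRankAt_eq {s : V} {r : ℕ} (h : r < (leavesAt G s).ncard) :
    ∃ u ∈ leavesAt G s, leafRankAt G s u = r := by
  classical
  have hcard : r < ((Set.toFinite (leavesAt G s)).toFinset).card := by
    rwa [Set.ncard_eq_toFinset_card _ (Set.toFinite _)] at h
  set F := (Set.toFinite (leavesAt G s)).toFinset with hF
  set x := F.equivFin.symm ⟨r, by simpa using hcard⟩ with hx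
  refine ⟨x.val, by have := x.prop; rwa [Set.Finite.mem_toFinset] at this, ?_⟩
  rw [leafRankAt, dif_pos x.prop]
  show (F.equivFin ⟨x.val, x.prop⟩).val = r
  rw [Subtype.coe_eta, hx, Equiv.apply_symm_apply]

end AuxDist

/-- For any tree of order at least two, `pd(T) ≤ ξ + θ - 1`. -/
theorem partitionDim_le_xi_add_theta_sub_one {V : Type*} [Fintype V] (G : SimpleGraph V)
    (hT : G.IsTree) (hV : 2 ≤ Fintype.card V) :
    partitionDim G ≤ numSupport G + maxLeavesAtSupport G - 1 := by
  classical
  have hc := hT.isConnected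
  set ξ := numSupport G with hxi
  set θ := maxLeavesAtSupport G with hthdef
  have hL1 : ∀ u w : V, IsLeaf G u → w ≠ u → G.dist w u = G.dist w (leafSupp G u) + 1 :=
    fun u w hu hw => dist_leaf_aux hc (neighborSet_leafSupp hu) hw
  -- existence of a support vertex
  obtain ⟨a, b, hab⟩ := Fintype.exists_pair_of_one_lt_card (α := V) (by omega)
  obtain ⟨l₀, hl₀leaf, -⟩ := exists_leaf_beyond hT hab
  -- the set defining θ
  have hseteq : {n : ℕ | ∃ v, IsSupport G v ∧ n = {u | G.Adj v u ∧ IsLeaf G u}.ncard}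
      = {n : ℕ | ∃ v, IsSupport G v ∧ n = (leavesAt G v).ncard} := rfl
  have hbdd : BddAbove {n : ℕ | ∃ v, IsSupport G v ∧ n = (leavesAt G v).ncard} := by
    refine ⟨Fintype.card V, ?_⟩
    rintro n ⟨v, hv, rfl⟩
    have := Set.ncard_le_ncard (Set.subset_univ (leavesAt G v)) (Set.toFinite _)
    rwa [Set.ncard_univ, Nat.card_eq_fintype_card] at this
  have hSne : {n : ℕ | ∃ v, IsSupport G v ∧ n = (leavesAt G v).ncard}.Nonempty :=
    ⟨_, leafSupp G l₀, isSupport_leafSupp hl₀leaf, rfl⟩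
  have hθmem : ∃ s, IsSupport G s ∧ θ = (leavesAt G s).ncard := by
    have := Nat.sSup_mem hSne hbdd
    exact this
  obtain ⟨s₀, hs₀, hθ0⟩ := hθmem
  have hle_θ : ∀ s, IsSupport G s → (leavesAt G s).ncard ≤ θ := fun s hs =>
    le_csSup hbdd ⟨s, hs, rfl⟩
  have hcard_pos : ∀ s, IsSupport G s → 0 < (leavesAt G s).ncard := by
    rintro s ⟨u, hadj, hu⟩
    rw [Set.ncard_pos (Set.toFinite _)]
    exact ⟨u, hadj, hu⟩
  have hθpos : 1 ≤ θ := by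
    have := hcard_pos s₀ hs₀; omega
  have hξpos : 1 ≤ ξ := by
    rw [hxi, numSupport]
    have : 0 < {v | IsSupport G v}.ncard := by
      rw [Set.ncard_pos (Set.toFinite _)]; exact ⟨s₀, hs₀⟩
    omega
  -- choice of a rank-zero leaf at each support vertex
  have hu0ex : ∀ s : V, IsSupport G s → ∃ u, u ∈ leavesAt G s ∧ leafRankAt G s u = 0 :=
    fun s hs => exists_leafRankAt_eq (hcard_pos s hs)
  choose u0 hu0mem hu0rank using hu0ex
  have hu0leaf : ∀ s hs, IsLeaf G (u0 s hs) := fun s hs => (hu0mem s hs).2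
  have hu0supp : ∀ s hs, leafSupp G (u0 s hs) = s := fun s hs => leafSupp_eq_of_mem (hu0mem s hs)
  have hu0rk : ∀ s hs, leafRank G (u0 s hs) = 0 := fun s hs =>
    (leafRank_eq_leafRankAt (hu0mem s hs)).trans (hu0rank s hs)
  have hmemLA : ∀ v : V, IsLeaf G v → v ∈ leavesAt G (leafSupp G v) :=
    fun v h => ⟨adj_leafSupp h, h⟩
  have hlt : ∀ v, IsLeaf G v → leafRank G v ≠ 0 → leafRank G v - 1 < θ - 1 := by
    intro v h h0
    have h1 : leafRank G v < (leavesAt G (leafSupp G v)).ncard :=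
      (leafRank_eq_leafRankAt (hmemLA v h)) ▸ leafRankAt_lt (hmemLA v h)
    have h2 := hle_θ _ (isSupport_leafSupp h)
    omega
  -- the coloring
  set c : V → ({s : V // IsSupport G s} ⊕ Fin (θ - 1)) := fun v =>
    if h : IsLeaf G v then
      if h0 : leafRank G v = 0 then Sum.inl ⟨leafSupp G v, isSupport_leafSupp h⟩
      else Sum.inr ⟨leafRank G v - 1, hlt v h h0⟩
    else Sum.inl ⟨s₀, hs₀⟩
    with hcdef
  have hc_nonleaf : ∀ v, ¬IsLeaf G v → c v = Sum.inl ⟨s₀, hs₀⟩ := by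
    intro v h; simp only [hcdef]; rw [dif_neg h]
  have hc_leaf0 : ∀ v (h : IsLeaf G v) (_ : leafRank G v = 0),
      c v = Sum.inl ⟨leafSupp G v, isSupport_leafSupp h⟩ := by
    intro v h h0; simp only [hcdef]; rw [dif_pos h, dif_pos h0]
  have hc_leaf1 : ∀ v (h : IsLeaf G v) (h0 : leafRank G v ≠ 0),
      c v = Sum.inr ⟨leafRank G v - 1, hlt v h h0⟩ := by
    intro v h h0; simp only [hcdef]; rw [dif_pos h, dif_neg h0]
  have hcu0 : ∀ s hs, c (u0 s hs) = Sum.inl ⟨s, hs⟩ := by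
    intro s hs
    rw [hc_leaf0 _ (hu0leaf s hs) (hu0rk s hs)]
    exact congrArg Sum.inl (Subtype.ext (hu0supp s hs))
  -- class of a non-s₀ support is a singleton
  have hclass_inl : ∀ s (hs : IsSupport G s), s ≠ s₀ →
      {w | c w = Sum.inl ⟨s, hs⟩} = {u0 s hs} := by
    intro s hs hne
    ext w
    simp only [Set.mem_setOf_eq, Set.mem_singleton_iff]
    constructor
    · intro h
      by_cases hw : IsLeaf G w
      · by_cases h0 : leafRank G w = 0
        · rw [hc_leaf0 w hw h0] at h
          simp only [Sum.inl.injEq, Subtype.mk.injEq] at h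
          refine leafRankAt_injOn (h ▸ hmemLA w hw) (hu0mem s hs) ?_
          rw [← leafRank_eq_leafRankAt (h ▸ hmemLA w hw), h0, hu0rank s hs]
        · rw [hc_leaf1 w hw h0] at h
          simp at h
      · rw [hc_nonleaf w hw] at h
        simp only [Sum.inl.injEq, Subtype.mk.injEq] at h
        exact absurd h.symm hne
    · rintro rfl
      exact hcu0 s hs
  -- the key injectivity statement
  have hresolve : ∀ x y : V,
      (∀ i, distSet G x {w | c w = i} = distSet G y {w | c w = i}) → x = y := by
    intro x y hd
    by_contra hxy
    have hdxy : 0 < G.dist x y := hc.pos_dist_of_ne hxy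
    have hcc : c y = c x := by
      have h1 : distSet G x {w | c w = c x} = 0 := distSet_eq_zero_of_mem' rfl
      have h2 : distSet G y {w | c w = c x} = 0 := (hd (c x)).symm.trans h1
      exact mem_of_distSet_eq_zero' hc (⟨x, rfl⟩ : Set.Nonempty {w | c w = c x}) h2
    have hdiff : ∀ s (hs : IsSupport G s), s ≠ s₀ →
        G.dist x (u0 s hs) ≠ G.dist y (u0 s hs) → False := by
      intro s hs hne hneq
      have := hd (Sum.inl ⟨s, hs⟩)
      rw [hclass_inl s hs hne, distSet_singleton', distSet_singleton'] at this
      exact hneq this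
    -- if the support of a leaf a is itself a leaf b, then b has rank 0
    have hsupp_leaf_rank : ∀ a b : V, IsLeaf G a → IsLeaf G b → leafSupp G a = b →
        leafRank G b = 0 := by
      intro a b ha hb hab
      have hba : leafSupp G b = a := by
        apply leafSupp_eq hb
        have : G.Adj b a := hab ▸ adj_leafSupp ha
        exact this.symm
      have hsub : leavesAt G (leafSupp G b) ⊆ {b} := by
        intro w hw
        have : w ∈ G.neighborSet a := by rw [← hba]; exact hw.1
        rw [neighborSet_leafSupp ha, hab] at this
        exact this
      have h1 : (leavesAt G (leafSupp G b)).ncard ≤ 1 := by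
        have := Set.ncard_le_ncard hsub (Set.toFinite _)
        simpa using this
      have h2 : leafRank G b < (leavesAt G (leafSupp G b)).ncard :=
        (leafRank_eq_leafRankAt (hmemLA b hb)) ▸ leafRankAt_lt (hmemLA b hb)
      omega
    by_cases hxleaf : IsLeaf G x <;> by_cases hyleaf : IsLeaf G y
    · -- both leaves
      set sx := leafSupp G x with hsx
      set sy := leafSupp G y with hsy
      by_cases hsxy : sx = sy
      · -- same support: ranks distinguish
        have hymem : y ∈ leavesAt G sx := by rw [hsxy]; exact hmemLA y hyleaf
        by_cases hx0 : leafRank G x = 0 <;> by_cases hy0 : leafRank G y = 0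
        · apply hxy
          refine leafRankAt_injOn (hmemLA x hxleaf) hymem ?_
          rw [← leafRank_eq_leafRankAt (hmemLA x hxleaf), ← leafRank_eq_leafRankAt hymem,
            hx0, hy0]
        · rw [hc_leaf1 y hyleaf hy0, hc_leaf0 x hxleaf hx0] at hcc; simp at hcc
        · rw [hc_leaf0 y hyleaf hy0, hc_leaf1 x hxleaf hx0] at hcc; simp at hcc
        · rw [hc_leaf1 y hyleaf hy0, hc_leaf1 x hxleaf hx0] at hcc
          simp only [Sum.inr.injEq] at hcc
          have hval := congrArg Fin.val hcc
          simp only at hval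
          apply hxy
          refine leafRankAt_injOn (hmemLA x hxleaf) hymem ?_
          rw [← leafRank_eq_leafRankAt (hmemLA x hxleaf), ← leafRank_eq_leafRankAt hymem]
          omega
      · -- different supports
        by_cases hx0 : leafRank G x = 0 <;> by_cases hy0 : leafRank G y = 0
        · rw [hc_leaf0 y hyleaf hy0, hc_leaf0 x hxleaf hx0] at hcc
          simp only [Sum.inl.injEq, Subtype.mk.injEq] at hcc
          exact hsxy hcc.symm
        · rw [hc_leaf1 y hyleaf hy0, hc_leaf0 x hxleaf hx0] at hcc; simp at hcc
        · rw [hc_leaf0 y hyleaf hy0, hc_leaf1 x hxleaf hx0] at hcc; simp at hcc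
        · -- both ranks nonzero
          by_cases hsx0 : sx = s₀
          · -- use sy
            have hsy0 : sy ≠ s₀ := fun h => hsxy (hsx0.trans h.symm)
            have hssy : IsSupport G sy := isSupport_leafSupp hyleaf
            apply hdiff sy hssy hsy0
            have hyu : y ≠ u0 sy hssy := by
              intro h
              apply hy0
              rw [h]; exact hu0rk sy hssy
            have hxu : x ≠ u0 sy hssy := by
              intro h
              apply hsxy
              rw [hsx, h]
              exact hu0supp sy hssy
            have e1 : G.dist y (u0 sy hssy) = G.dist y sy + 1 := by
              have := hL1 (u0 sy hssy) y (hu0leaf sy hssy) hyu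
              rwa [hu0supp sy hssy] at this
            have e2 : G.dist y sy = 1 := dist_eq_one_iff_adj.mpr (adj_leafSupp hyleaf).symm
            have e3 : G.dist x (u0 sy hssy) = G.dist x sy + 1 := by
              have := hL1 (u0 sy hssy) x (hu0leaf sy hssy) hxu
              rwa [hu0supp sy hssy] at this
            have hsyx : sy ≠ x := by
              intro h
              exact hx0 (hsupp_leaf_rank y x hyleaf hxleaf (by rw [← hsy]; exact h))
            have e4 : G.dist sy x = G.dist sy sx + 1 := hL1 x sy hxleaf hsyx
            have e5 : 1 ≤ G.dist sy sx := hc.pos_dist_of_ne (fun h => hsxy h.symm)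
            have c1 : G.dist x sy = G.dist sy x := dist_comm ..
            omega
          · have hssx : IsSupport G sx := isSupport_leafSupp hxleaf
            apply hdiff sx hssx hsx0
            have hxu : x ≠ u0 sx hssx := by
              intro h
              apply hx0
              rw [h]; exact hu0rk sx hssx
            have hyu : y ≠ u0 sx hssx := by
              intro h
              apply hsxy
              rw [hsy, h]
              exact (hu0supp sx hssx).symm
            have e1 : G.dist x (u0 sx hssx) = G.dist x sx + 1 := by
              have := hL1 (u0 sx hssx) x (hu0leaf sx hssx) hxu
              rwa [hu0supp sx hssx] at this
            have e2 : G.dist x sx = 1 := dist_eq_one_iff_adj.mpr (adj_leafSupp hxleaf).symm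
            have e3 : G.dist y (u0 sx hssx) = G.dist y sx + 1 := by
              have := hL1 (u0 sx hssx) y (hu0leaf sx hssx) hyu
              rwa [hu0supp sx hssx] at this
            have hsxy' : sx ≠ y := by
              intro h
              exact hy0 (hsupp_leaf_rank x y hxleaf hyleaf (by rw [← hsx]; exact h))
            have e4 : G.dist sx y = G.dist sx sy + 1 := hL1 y sx hyleaf hsxy'
            have e5 : 1 ≤ G.dist sx sy := hc.pos_dist_of_ne hsxy
            have c1 : G.dist y sx = G.dist sx y := dist_comm ..
            omega
    · -- x leaf, y not
      have hcx : c x = Sum.inl ⟨s₀, hs₀⟩ := hcc.symm.trans (hc_nonleaf y hyleaf)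
      by_cases hx0 : leafRank G x = 0
      swap
      · rw [hc_leaf1 x hxleaf hx0] at hcx; simp at hcx
      have hsx0 : leafSupp G x = s₀ := by
        rw [hc_leaf0 x hxleaf hx0] at hcx
        simpa only [Sum.inl.injEq, Subtype.mk.injEq] using hcx
      obtain ⟨l, hlleaf, hl⟩ := exists_leaf_beyond hT (Ne.symm hxy)
      have hlx : x ≠ l := by
        intro h
        rw [← h] at hl
        rw [SimpleGraph.dist_self] at hl
        have c3 : G.dist y x = G.dist x y := dist_comm ..
        omega
      have hly : y ≠ l := fun h => hyleaf (h ▸ hlleaf)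
      set sl := leafSupp G l with hsl
      have d1 : G.dist x l = G.dist x sl + 1 := hL1 l x hlleaf hlx
      have d2 : G.dist y l = G.dist y sl + 1 := hL1 l y hlleaf hly
      have c1 : G.dist l x = G.dist x l := dist_comm ..
      have c2 : G.dist l y = G.dist y l := dist_comm ..
      have c3 : G.dist y x = G.dist x y := dist_comm ..
      have E : G.dist x sl = G.dist y sl + G.dist x y := by omega
      by_cases hsl0 : sl = s₀
      · have hxs1 : G.dist x sl = 1 := by
          rw [hsl0, ← hsx0]
          exact dist_eq_one_iff_adj.mpr (adj_leafSupp hxleaf).symm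
        have hy0 : G.dist y sl = 0 := by omega
        have hxy1 : G.dist x y = 1 := by omega
        have hys : y = sl := hc.dist_eq_zero_iff.mp hy0
        by_cases hex : ∀ s, IsSupport G s → s = s₀
        · -- all supports equal s₀; use an `inr` class
          have hlmem : l ∈ leavesAt G s₀ := by
            have := hmemLA l hlleaf
            rwa [← hsl, hsl0] at this
          have hxmem : x ∈ leavesAt G s₀ := by
            have := hmemLA x hxleaf
            rwa [hsx0] at this
          have h2le : 1 < (leavesAt G s₀).ncard := by
            rw [Set.one_lt_ncard_iff (Set.toFinite _)]
            exact ⟨l, x, hlmem, hxmem, fun h => hlx h.symm⟩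
          have hθ2 : 2 ≤ θ := by rw [hθ0]; omega
          set j0 : Fin (θ - 1) := ⟨0, by omega⟩ with hj0
          have hPdesc : ∀ w, c w = Sum.inr j0 ↔ (IsLeaf G w ∧ leafRank G w = 1) := by
            intro w
            constructor
            · intro h
              by_cases hw : IsLeaf G w
              · by_cases h0 : leafRank G w = 0
                · rw [hc_leaf0 w hw h0] at h; simp at h
                · rw [hc_leaf1 w hw h0] at h
                  simp only [Sum.inr.injEq] at h
                  have hval := congrArg Fin.val h
                  simp only [hj0] at hval
                  exact ⟨hw, by omega⟩
              · rw [hc_nonleaf w hw] at h; simp at h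
            · rintro ⟨hw, h1⟩
              rw [hc_leaf1 w hw (by omega)]
              exact congrArg Sum.inr (Fin.ext (by simp [h1, hj0]))
          have h1lt : (1 : ℕ) < (leavesAt G s₀).ncard := h2le
          obtain ⟨u1, hu1mem, hu1rk⟩ := exists_leafRankAt_eq h1lt
          have hu1P : c u1 = Sum.inr j0 :=
            (hPdesc u1).mpr ⟨hu1mem.2, (leafRank_eq_leafRankAt hu1mem).trans hu1rk⟩
          have hPne : ({w | c w = Sum.inr j0} : Set V).Nonempty := ⟨u1, hu1P⟩
          obtain ⟨w2, hw2P, hw2⟩ := exists_distSet_eq' (G := G) hPne x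
          have hle1 : distSet G y {w | c w = Sum.inr j0} ≤ G.dist y w2 := distSet_le' (G := G) hw2P y
          obtain ⟨hw2leaf, hw2rk⟩ := (hPdesc w2).mp hw2P
          have hw2x : w2 ≠ x := by
            intro h; rw [h] at hw2rk; omega
          have hshift : G.dist w2 x = G.dist w2 y + 1 := by
            have := hL1 x w2 hxleaf hw2x
            rwa [hsx0, ← hsl0, ← hys] at this
          have hEq := hd (Sum.inr j0)
          have cA : G.dist x w2 = G.dist w2 x := dist_comm ..
          have cB : G.dist y w2 = G.dist w2 y := dist_comm ..
          omega
        · push_neg at hex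
          obtain ⟨s, hss, hsne⟩ := hex
          apply hdiff s hss hsne
          have hux : x ≠ u0 s hss := by
            intro h
            apply hsne
            rw [← hu0supp s hss, ← h, hsx0]
          have huy : y ≠ u0 s hss := fun h => hyleaf (h ▸ hu0leaf s hss)
          have g1 : G.dist (u0 s hss) x = G.dist (u0 s hss) y + 1 := by
            have := hL1 x (u0 s hss) hxleaf (Ne.symm hux)
            rwa [hsx0, ← hsl0, ← hys] at this
          have cA : G.dist x (u0 s hss) = G.dist (u0 s hss) x := dist_comm ..
          have cB : G.dist y (u0 s hss) = G.dist (u0 s hss) y := dist_comm ..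
          omega
      · have hssl : IsSupport G sl := isSupport_leafSupp hlleaf
        apply hdiff sl hssl hsl0
        have hxu : x ≠ u0 sl hssl := by
          intro h
          apply hsl0
          rw [← hu0supp sl hssl, ← h, hsx0]
        have hyu : y ≠ u0 sl hssl := fun h => hyleaf (h ▸ hu0leaf sl hssl)
        have f1 : G.dist x (u0 sl hssl) = G.dist x sl + 1 := by
          have := hL1 (u0 sl hssl) x (hu0leaf sl hssl) hxu
          rwa [hu0supp sl hssl] at this
        have f2 : G.dist y (u0 sl hssl) = G.dist y sl + 1 := by
          have := hL1 (u0 sl hssl) y (hu0leaf sl hssl) hyu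
          rwa [hu0supp sl hssl] at this
        omega
    · -- y leaf, x not
      have hcy : c y = Sum.inl ⟨s₀, hs₀⟩ := hcc.trans (hc_nonleaf x hxleaf)
      by_cases hy0 : leafRank G y = 0
      swap
      · rw [hc_leaf1 y hyleaf hy0] at hcy; simp at hcy
      have hsy0 : leafSupp G y = s₀ := by
        rw [hc_leaf0 y hyleaf hy0] at hcy
        simpa only [Sum.inl.injEq, Subtype.mk.injEq] using hcy
      obtain ⟨l, hlleaf, hl⟩ := exists_leaf_beyond hT hxy
      have hly : y ≠ l := by
        intro h
        rw [← h] at hl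
        rw [SimpleGraph.dist_self] at hl
        omega
      have hlx : x ≠ l := fun h => hxleaf (h ▸ hlleaf)
      set sl := leafSupp G l with hsl
      have d1 : G.dist y l = G.dist y sl + 1 := hL1 l y hlleaf hly
      have d2 : G.dist x l = G.dist x sl + 1 := hL1 l x hlleaf hlx
      have c1 : G.dist l y = G.dist y l := dist_comm ..
      have c2 : G.dist l x = G.dist x l := dist_comm ..
      have E : G.dist y sl = G.dist x sl + G.dist x y := by omega
      by_cases hsl0 : sl = s₀
      · have hys1 : G.dist y sl = 1 := by
          rw [hsl0, ← hsy0]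
          exact dist_eq_one_iff_adj.mpr (adj_leafSupp hyleaf).symm
        have hx0' : G.dist x sl = 0 := by omega
        have hxy1 : G.dist x y = 1 := by omega
        have hxs : x = sl := hc.dist_eq_zero_iff.mp hx0'
        by_cases hex : ∀ s, IsSupport G s → s = s₀
        · have hlmem : l ∈ leavesAt G s₀ := by
            have := hmemLA l hlleaf
            rwa [← hsl, hsl0] at this
          have hymem : y ∈ leavesAt G s₀ := by
            have := hmemLA y hyleaf
            rwa [hsy0] at this
          have h2le : 1 < (leavesAt G s₀).ncard := by
            rw [Set.one_lt_ncard_iff (Set.toFinite _)]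
            exact ⟨l, y, hlmem, hymem, fun h => hly h.symm⟩
          have hθ2 : 2 ≤ θ := by rw [hθ0]; omega
          set j0 : Fin (θ - 1) := ⟨0, by omega⟩ with hj0
          have hPdesc : ∀ w, c w = Sum.inr j0 ↔ (IsLeaf G w ∧ leafRank G w = 1) := by
            intro w
            constructor
            · intro h
              by_cases hw : IsLeaf G w
              · by_cases h0 : leafRank G w = 0
                · rw [hc_leaf0 w hw h0] at h; simp at h
                · rw [hc_leaf1 w hw h0] at h
                  simp only [Sum.inr.injEq] at h
                  have hval := congrArg Fin.val h
                  simp only [hj0] at hval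
                  exact ⟨hw, by omega⟩
              · rw [hc_nonleaf w hw] at h; simp at h
            · rintro ⟨hw, h1⟩
              rw [hc_leaf1 w hw (by omega)]
              exact congrArg Sum.inr (Fin.ext (by simp [h1, hj0]))
          have h1lt : (1 : ℕ) < (leavesAt G s₀).ncard := h2le
          obtain ⟨u1, hu1mem, hu1rk⟩ := exists_leafRankAt_eq h1lt
          have hu1P : c u1 = Sum.inr j0 :=
            (hPdesc u1).mpr ⟨hu1mem.2, (leafRank_eq_leafRankAt hu1mem).trans hu1rk⟩
          have hPne : ({w | c w = Sum.inr j0} : Set V).Nonempty := ⟨u1, hu1P⟩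
          obtain ⟨w2, hw2P, hw2⟩ := exists_distSet_eq' (G := G) hPne y
          have hle1 : distSet G x {w | c w = Sum.inr j0} ≤ G.dist x w2 := distSet_le' (G := G) hw2P x
          obtain ⟨hw2leaf, hw2rk⟩ := (hPdesc w2).mp hw2P
          have hw2y : w2 ≠ y := by
            intro h; rw [h] at hw2rk; omega
          have hshift : G.dist w2 y = G.dist w2 x + 1 := by
            have := hL1 y w2 hyleaf hw2y
            rwa [hsy0, ← hsl0, ← hxs] at this
          have hEq := hd (Sum.inr j0)
          have cA : G.dist y w2 = G.dist w2 y := dist_comm ..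
          have cB : G.dist x w2 = G.dist w2 x := dist_comm ..
          omega
        · push_neg at hex
          obtain ⟨s, hss, hsne⟩ := hex
          apply hdiff s hss hsne
          have huy : y ≠ u0 s hss := by
            intro h
            apply hsne
            rw [← hu0supp s hss, ← h, hsy0]
          have hux : x ≠ u0 s hss := fun h => hxleaf (h ▸ hu0leaf s hss)
          have g1 : G.dist (u0 s hss) y = G.dist (u0 s hss) x + 1 := by
            have := hL1 y (u0 s hss) hyleaf (Ne.symm huy)
            rwa [hsy0, ← hsl0, ← hxs] at this
          have cA : G.dist x (u0 s hss) = G.dist (u0 s hss) x := dist_comm ..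
          have cB : G.dist y (u0 s hss) = G.dist (u0 s hss) y := dist_comm ..
          omega
      · have hssl : IsSupport G sl := isSupport_leafSupp hlleaf
        apply hdiff sl hssl hsl0
        have hyu : y ≠ u0 sl hssl := by
          intro h
          apply hsl0
          rw [← hu0supp sl hssl, ← h, hsy0]
        have hxu : x ≠ u0 sl hssl := fun h => hxleaf (h ▸ hu0leaf sl hssl)
        have f1 : G.dist y (u0 sl hssl) = G.dist y sl + 1 := by
          have := hL1 (u0 sl hssl) y (hu0leaf sl hssl) hyu
          rwa [hu0supp sl hssl] at this
        have f2 : G.dist x (u0 sl hssl) = G.dist x sl + 1 := by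
          have := hL1 (u0 sl hssl) x (hu0leaf sl hssl) hxu
          rwa [hu0supp sl hssl] at this
        omega
    · -- both non-leaves
      obtain ⟨lx, hlxleaf, hlx⟩ := exists_leaf_beyond hT hxy
      obtain ⟨ly, hlyleaf, hly⟩ := exists_leaf_beyond hT (Ne.symm hxy)
      have hlxx : x ≠ lx := fun h => hxleaf (h ▸ hlxleaf)
      have hlxy : y ≠ lx := fun h => hyleaf (h ▸ hlxleaf)
      have hlyx : x ≠ ly := fun h => hxleaf (h ▸ hlyleaf)
      have hlyy : y ≠ ly := fun h => hyleaf (h ▸ hlyleaf)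
      set sx := leafSupp G lx with hsx
      set sy := leafSupp G ly with hsy
      have d1 : G.dist y lx = G.dist y sx + 1 := hL1 lx y hlxleaf hlxy
      have d2 : G.dist x lx = G.dist x sx + 1 := hL1 lx x hlxleaf hlxx
      have d3 : G.dist y ly = G.dist y sy + 1 := hL1 ly y hlyleaf hlyy
      have d4 : G.dist x ly = G.dist x sy + 1 := hL1 ly x hlyleaf hlyx
      have c1 : G.dist lx y = G.dist y lx := dist_comm ..
      have c2 : G.dist lx x = G.dist x lx := dist_comm ..
      have c3 : G.dist ly x = G.dist x ly := dist_comm ..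
      have c4 : G.dist ly y = G.dist y ly := dist_comm ..
      have c5 : G.dist y x = G.dist x y := dist_comm ..
      have E1 : G.dist y sx = G.dist x sx + G.dist x y := by omega
      have E2 : G.dist x sy = G.dist y sy + G.dist x y := by omega
      have hsxsy : sx ≠ sy := by
        intro h; rw [h] at E1; omega
      by_cases hsx0 : sx = s₀
      · have hsy0 : sy ≠ s₀ := fun h => hsxsy (hsx0.trans h.symm)
        have hssy : IsSupport G sy := isSupport_leafSupp hlyleaf
        apply hdiff sy hssy hsy0
        have hxu : x ≠ u0 sy hssy := fun h => hxleaf (h ▸ hu0leaf sy hssy)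
        have hyu : y ≠ u0 sy hssy := fun h => hyleaf (h ▸ hu0leaf sy hssy)
        have f1 : G.dist x (u0 sy hssy) = G.dist x sy + 1 := by
          have := hL1 (u0 sy hssy) x (hu0leaf sy hssy) hxu
          rwa [hu0supp sy hssy] at this
        have f2 : G.dist y (u0 sy hssy) = G.dist y sy + 1 := by
          have := hL1 (u0 sy hssy) y (hu0leaf sy hssy) hyu
          rwa [hu0supp sy hssy] at this
        omega
      · have hssx : IsSupport G sx := isSupport_leafSupp hlxleaf
        apply hdiff sx hssx hsx0
        have hxu : x ≠ u0 sx hssx := fun h => hxleaf (h ▸ hu0leaf sx hssx)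
        have hyu : y ≠ u0 sx hssx := fun h => hyleaf (h ▸ hu0leaf sx hssx)
        have f1 : G.dist x (u0 sx hssx) = G.dist x sx + 1 := by
          have := hL1 (u0 sx hssx) x (hu0leaf sx hssx) hxu
          rwa [hu0supp sx hssx] at this
        have f2 : G.dist y (u0 sx hssx) = G.dist y sx + 1 := by
          have := hL1 (u0 sx hssx) y (hu0leaf sx hssx) hyu
          rwa [hu0supp sx hssx] at this
        omega
  -- surjectivity
  have hsurj : Function.Surjective c := by
    rintro (⟨s, hs⟩ | ⟨j, hj⟩)
    · exact ⟨u0 s hs, hcu0 s hs⟩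
    · have hj1 : j + 1 < (leavesAt G s₀).ncard := by omega
      obtain ⟨u, hum, hur⟩ := exists_leafRankAt_eq hj1
      have hurk : leafRank G u = j + 1 := (leafRank_eq_leafRankAt hum).trans hur
      refine ⟨u, ?_⟩
      rw [hc_leaf1 u hum.2 (by omega)]
      exact congrArg Sum.inr (Fin.ext (by simp [hurk]))
  -- cardinality of the index type
  have hcard : Fintype.card ({s : V // IsSupport G s} ⊕ Fin (θ - 1)) = ξ + (θ - 1) := by
    rw [Fintype.card_sum, Fintype.card_fin]
    congr 1
    rw [hxi, numSupport, ← Nat.card_coe_set_eq, Nat.card_eq_fintype_card]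
    rfl
  set e := Fintype.equivFinOfCardEq hcard with he
  have hmem : (ξ + (θ - 1)) ∈ {t : ℕ | ∃ c : V → Fin t, IsResolvingPartition G c} := by
    refine ⟨fun v => e (c v), e.surjective.comp hsurj, ?_⟩
    intro u v h
    apply hresolve u v
    intro i
    have := h (e i)
    have hset : ∀ w, (e (c w) = e i) = (c w = i) := by
      intro w
      simp only [EmbeddingLike.apply_eq_iff_eq]
    simpa only [hset] using this
  have hfin : partitionDim G ≤ ξ + (θ - 1) := Nat.sInf_le hmem
  omega
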